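/- Let D be a category with pullbacks equipped with an orthogonal factorization system (E, M), let A be a category with a terminal object ⊤, and let G : A ⥤ D be a functor. Then the category whose objects are pairs (S, m) of a functor S : A ⥤ D and a cartesian natural transformation m : S ⟶ G with m_⊤ ∈ M (with morphisms the natural transformations over G) is equivalent to the M-slice category M/(G ⊤), the full subcategory of the slice category over G ⊤ on objects whose structure morphism lies in M. -/

import Mathlib

open CategoryTheory Limits

universe v u v' u'

/-- An orthogonal factorization system `(E, M)` on a category. -/
structure IsOFS {C : Type u} [Category.{v} C] (E M : MorphismProperty C) : Prop where
  isoE : ∀ {X Y : C} (f : X ⟶ Y), IsIso f → E f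
  isoM : ∀ {X Y : C} (f : X ⟶ Y), IsIso f → M f
  compE : ∀ {X Y Z : C} (f : X ⟶ Y) (g : Y ⟶ Z), E f → E g → E (f ≫ g)
  compM : ∀ {X Y Z : C} (f : X ⟶ Y) (g : Y ⟶ Z), M f → M g → M (f ≫ g)
  fac : ∀ {X Y : C} (f : X ⟶ Y), ∃ (Z : C) (e : X ⟶ Z) (m : Z ⟶ Y), E e ∧ M m ∧ e ≫ m = f
  orth : ∀ {X Y X' Y' : C} (e : X ⟶ Y) (m : X' ⟶ Y') (u : X ⟶ X') (v : Y ⟶ Y'),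
    E e → M m → u ≫ m = e ≫ v → ∃! d : Y ⟶ X', e ≫ d = u ∧ d ≫ m = v

/-- A natural transformation is cartesian when all its naturality squares are pullbacks. -/
def IsCartesianNT {A : Type u'} [Category.{v'} A] {D : Type u} [Category.{v} D]
    {F G : A ⥤ D} (τ : F ⟶ G) : Prop :=
  ∀ {X Y : A} (f : X ⟶ Y), IsPullback (F.map f) (τ.app X) (τ.app Y) (G.map f)

/-- The category of pairs `(S, m)` of a functor `S : A ⥤ D` and a cartesian natural
transformation `m : S ⟶ G` with `m_⊤ ∈ M`, with morphisms the natural transformations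
over `G`. -/
abbrev CartMSub {A : Type u'} [Category.{v'} A] [HasTerminal A]
    {D : Type u} [Category.{v} D] (M : MorphismProperty D) (G : A ⥤ D) :=
  ObjectProperty.FullSubcategory (fun f : Over G => IsCartesianNT f.hom ∧ M (f.hom.app (⊤_ A)))

/-- The `M`-slice category `M/T`. -/
abbrev MSlice {D : Type u} [Category.{v} D] (M : MorphismProperty D) (T : D) :=
  ObjectProperty.FullSubcategory (fun f : Over T => M f.hom)

namespace Stmt6Aux

/-- Compositions in a full subcategory are compositions in the ambient category. -/
@[simp] lemma fs_comp {C : Type*} [Category C] {P : C → Prop} {p q r : ObjectProperty.FullSubcategory P}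
    (u : p ⟶ q) (v : q ⟶ r) :
    (u ≫ v : p ⟶ r).hom = u.hom ≫ v.hom := rfl

/-- Identities in a full subcategory are identities in the ambient category. -/
@[simp] lemma fs_id {C : Type*} [Category C] {P : C → Prop} (p : ObjectProperty.FullSubcategory P) :
    (𝟙 p : p ⟶ p).hom = 𝟙 p.obj := rfl

/-- The action of a lifted functor is that of the original functor. -/
@[simp] lemma fs_lift_map {C : Type*} [Category C] {D' : Type*} [Category D']
    {P : D' → Prop} (F : C ⥤ D') (hF : ∀ X, P (F.obj X)) {X Y : C} (f : X ⟶ Y) :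
    ((ObjectProperty.lift P F hF).map f).hom
      = F.map f := rfl

/-- An isomorphism of a full subcategory from one of the ambient category. -/
@[simps] def fsIso {C : Type*} [Category C] {P : C → Prop} {p q : ObjectProperty.FullSubcategory P}
    (i : p.obj ≅ q.obj) : p ≅ q where
  hom := ⟨i.hom⟩
  inv := ⟨i.inv⟩
  hom_inv_id := by ext1; exact i.hom_inv_id
  inv_hom_id := by ext1; exact i.inv_hom_id

variable {A : Type u'} [Category.{v'} A] [HasTerminal A]
  {D : Type u} [Category.{v} D] [HasPullbacks D]
  (G : A ⥤ D)

set_option linter.unusedSectionVars false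

/-- The canonical map `G a ⟶ G ⊤`. -/
noncomputable abbrev t (a : A) : G.obj a ⟶ G.obj (⊤_ A) := G.map (terminal.from a)

lemma t_natural {a b : A} (g : a ⟶ b) : G.map g ≫ t G b = t G a := by
  rw [← G.map_comp]; congr 1; exact terminal.hom_ext _ _

lemma t_top : t G (⊤_ A) = 𝟙 _ := by
  show G.map (terminal.from (⊤_ A)) = 𝟙 _
  rw [show terminal.from (⊤_ A) = 𝟙 _ from terminal.hom_ext _ _, G.map_id]

/-- Evaluation at the terminal object, `Over G ⥤ Over (G ⊤)`. -/
@[simps] noncomputable def ev : Over G ⥤ Over (G.obj (⊤_ A)) where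
  obj f := Over.mk (f.hom.app (⊤_ A))
  map {f g} τ := Over.homMk (τ.left.app (⊤_ A)) (by dsimp; rw [← Over.w τ]; rfl)
  map_id f := by ext; simp
  map_comp τ σ := by ext; simp

/-- Base change of `f : X ⟶ G ⊤` along the canonical maps. -/
@[simps] noncomputable def baseChange (f : Over (G.obj (⊤_ A))) : A ⥤ D where
  obj a := pullback f.hom (t G a)
  map {a b} g := pullback.map _ _ _ _ (𝟙 _) (G.map g) (𝟙 _) (by simp)
    (by simp [t_natural])
  map_id a := by
    apply pullback.hom_ext <;> simp
  map_comp {a b c} g g' := by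
    apply pullback.hom_ext <;> simp [pullback.map, pullback.lift_fst, pullback.lift_snd, pullback.lift_fst_assoc, pullback.lift_snd_assoc]

/-- The cartesian natural transformation `baseChange f ⟶ G`. -/
@[simps] noncomputable def baseChangeHom (f : Over (G.obj (⊤_ A))) : baseChange G f ⟶ G where
  app a := pullback.snd _ _
  naturality a b g := by simp [baseChange, pullback.map, pullback.lift_fst, pullback.lift_snd, pullback.lift_fst_assoc, pullback.lift_snd_assoc]

lemma baseChangeHom_cartesian (f : Over (G.obj (⊤_ A))) :
    IsCartesianNT (baseChangeHom G f) := by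
  intro a b g
  have h₁ : IsPullback (pullback.fst f.hom (t G b)) (pullback.snd f.hom (t G b))
      f.hom (t G b) := IsPullback.of_hasPullback _ _
  have h₂ : IsPullback ((baseChange G f).map g ≫ pullback.fst f.hom (t G b))
      (pullback.snd f.hom (t G a)) f.hom (G.map g ≫ t G b) := by
    have e : (baseChange G f).map g ≫ pullback.fst f.hom (t G b)
        = pullback.fst f.hom (t G a) := by simp [baseChange, pullback.map, pullback.lift_fst, pullback.lift_snd, pullback.lift_fst_assoc, pullback.lift_snd_assoc]
    rw [e, t_natural]
    exact IsPullback.of_hasPullback _ _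
  exact IsPullback.of_right h₂ (by simp [baseChange, pullback.map, pullback.lift_fst, pullback.lift_snd, pullback.lift_fst_assoc, pullback.lift_snd_assoc]) h₁

/-- Base change as a functor `Over (G ⊤) ⥤ Over G`. -/
@[simps] noncomputable def bc : Over (G.obj (⊤_ A)) ⥤ Over G where
  obj f := Over.mk (baseChangeHom G f)
  map {f f'} u := Over.homMk
    { app := fun a => pullback.map _ _ _ _ u.left (𝟙 _) (𝟙 _)
        (by simpa using (Over.w u).symm) (by simp)
      naturality := fun a b g => by
        show pullback.map f.hom (t G a) f.hom (t G b) (𝟙 _) (G.map g) (𝟙 _) (by simp)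
              (by simp [t_natural]) ≫
            pullback.map f.hom (t G b) f'.hom (t G b) u.left (𝟙 _) (𝟙 _)
              (by simpa using (Over.w u).symm) (by simp) =
          pullback.map f.hom (t G a) f'.hom (t G a) u.left (𝟙 _) (𝟙 _)
              (by simpa using (Over.w u).symm) (by simp) ≫
            pullback.map f'.hom (t G a) f'.hom (t G b) (𝟙 _) (G.map g) (𝟙 _) (by simp)
              (by simp [t_natural])
        apply pullback.hom_ext <;> simp [pullback.map, pullback.lift_fst, pullback.lift_snd, pullback.lift_fst_assoc, pullback.lift_snd_assoc] }
    (by ext a; exact (NatTrans.comp_app _ _ _).trans ((pullback.lift_snd (f := f'.hom) (g := t G a) _ _ _).trans (Category.comp_id _)))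
  map_id f := by
    ext a
    apply pullback.hom_ext <;> simp [baseChange, pullback.map, pullback.lift_fst, pullback.lift_snd, pullback.lift_fst_assoc, pullback.lift_snd_assoc] <;> exact Category.id_comp _
  map_comp {f f' f''} u u' := by
    ext a
    apply pullback.hom_ext <;> dsimp [baseChange] <;> simp [baseChange, pullback.map, pullback.lift_fst, pullback.lift_snd, pullback.lift_fst_assoc, pullback.lift_snd_assoc]

end Stmt6Aux

open Stmt6Aux in
/-- The category of `M'`-subobjects of a functor `G : A ⥤ D` (cartesian natural
transformations into `G` whose component at the terminal object is in `M`) is equivalent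
to the `M`-slice category `M/(G ⊤)`. -/
theorem stmt6 {A : Type u'} [Category.{v'} A] [HasTerminal A]
    {D : Type u} [Category.{v} D] [HasPullbacks D]
    (E M : MorphismProperty D) (h : IsOFS E M)
    (G : A ⥤ D) :
    Nonempty (CartMSub M G ≌ MSlice M (G.obj (⊤_ A))) := by
  refine ⟨?_⟩
  -- M-membership of the base-changed map at ⊤
  have hMsnd : ∀ (f : Over (G.obj (⊤_ A))), M f.hom →
      M (pullback.snd f.hom (t G (⊤_ A))) := by
    intro f hf
    haveI : IsIso (t G (⊤_ A)) := by rw [t_top]; infer_instance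
    have e : pullback.snd f.hom (t G (⊤_ A))
        = pullback.fst f.hom (t G (⊤_ A)) ≫ f.hom ≫ inv (t G (⊤_ A)) := by
      rw [← Category.assoc, pullback.condition]; simp
    rw [e]
    exact h.compM _ _ (h.isoM _ inferInstance)
      (h.compM _ _ hf (h.isoM _ inferInstance))
  let F : CartMSub M G ⥤ MSlice M (G.obj (⊤_ A)) :=
    ObjectProperty.lift _ (ObjectProperty.ι _ ⋙ ev G) (fun p => p.property.2)
  let R : MSlice M (G.obj (⊤_ A)) ⥤ CartMSub M G :=
    ObjectProperty.lift _ (ObjectProperty.ι _ ⋙ bc G)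
      (fun f => ⟨baseChangeHom_cartesian G f.obj, hMsnd f.obj f.property⟩)
  refine CategoryTheory.Equivalence.mk F R ?_ ?_
  · -- unit : 𝟭 ≅ F ⋙ R
    refine NatIso.ofComponents (fun p => ?_) ?_
    · -- component iso in CartMSub
      have hiso : ∀ a, IsPullback (p.obj.left.map (terminal.from a))
          (p.obj.hom.app a) (p.obj.hom.app (⊤_ A)) (t G a) := fun a =>
        p.property.1 (terminal.from a)
      refine fsIso (Over.isoMk (NatIso.ofComponents (fun a => (hiso a).isoPullback)
        (fun {a b} g => ?_)) (by ext a; exact (hiso a).isoPullback_hom_snd))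
      apply pullback.hom_ext
      · simp [F, R, ← Functor.map_comp]
        erw [Category.assoc, Category.assoc, IsPullback.isoPullback_hom_fst, pullback.lift_fst,
          Category.comp_id, IsPullback.isoPullback_hom_fst]
        refine (p.obj.left.map_comp _ _).symm.trans ?_; congr 1; exact terminal.hom_ext _ _
      · simp [F, R]
        erw [Category.assoc, Category.assoc, IsPullback.isoPullback_hom_snd, pullback.lift_snd,
          IsPullback.isoPullback_hom_snd_assoc]
        exact p.obj.hom.naturality g
    · intro p q τ
      apply ObjectProperty.hom_ext
      apply Over.OverMorphism.ext
      apply NatTrans.ext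
      funext a
      apply pullback.hom_ext
      · simp [F, R]
        refine (Category.assoc _ _ _).trans (Eq.trans ?_ (Category.assoc _ _ _).symm)
        erw [IsPullback.isoPullback_hom_fst, pullback.lift_fst, IsPullback.isoPullback_hom_fst_assoc]
        exact (τ.hom.left.naturality _).symm
      · simp [F, R]
        refine (Category.assoc _ _ _).trans (Eq.trans ?_ (Category.assoc _ _ _).symm)
        erw [IsPullback.isoPullback_hom_snd, pullback.lift_snd, Category.comp_id,
          IsPullback.isoPullback_hom_snd]
        exact NatTrans.congr_app (Over.w (τ.hom)) a
  · -- counit : R ⋙ F ≅ 𝟭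
    refine NatIso.ofComponents (fun f => ?_) ?_
    · haveI : IsIso (t G (⊤_ A)) := by rw [t_top]; infer_instance
      haveI hfst := (IsPullback.of_hasPullback f.obj.hom (t G (⊤_ A))).isIso_fst_of_isIso
      refine fsIso (Over.isoMk (@asIso _ _ _ _ (pullback.fst f.obj.hom (t G (⊤_ A))) hfst) ?_)
      dsimp
      show pullback.fst f.obj.hom (t G (⊤_ A)) ≫ f.obj.hom = _
      rw [pullback.condition]
      simp only [t_top, Category.comp_id]
      rfl
    · intro f f' u
      apply ObjectProperty.hom_ext
      apply Over.OverMorphism.ext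
      simp [F, R]
      exact pullback.lift_fst _ _ _
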